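/- Let X ⊆ ℝ^n be nonempty, f : ℝ^n → ℝ^m, K ⊆ ℝ^m a pointed closed convex cone (K ∩ (−K) = {0}), e ∈ K \ {0}, and x̄ ∈ X. Then cl cone[f(X) + K − (f(x̄) − e)] ∩ (−K) = {0} if and only if cl cone[f(X) − (f(x̄) − e)] ∩ (−K) = {0}. -/

import Mathlib

open Set Pointwise

/-- The smallest cone containing `D`: `cone D = {t • d : t ≥ 0, d ∈ D}`. -/
def coneGen {E : Type*} [AddCommGroup E] [Module ℝ E] (D : Set E) : Set E :=
  {x | ∃ t : ℝ, 0 ≤ t ∧ ∃ d ∈ D, x = t • d}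

open Filter Topology

lemma coneGen_smul_mem {E : Type*} [AddCommGroup E] [Module ℝ E] {D : Set E}
    {t : ℝ} (ht : 0 ≤ t) {x : E} (hx : x ∈ coneGen D) : t • x ∈ coneGen D := by
  obtain ⟨s, hs, d, hd, rfl⟩ := hx
  exact ⟨t * s, mul_nonneg ht hs, d, hd, smul_smul t s d⟩

lemma zero_mem_coneGen {E : Type*} [AddCommGroup E] [Module ℝ E] {D : Set E}
    (hD : D.Nonempty) : (0 : E) ∈ coneGen D := by
  obtain ⟨d, hd⟩ := hD
  exact ⟨0, le_refl 0, d, hd, (zero_smul ℝ d).symm⟩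

lemma coneGen_mono {E : Type*} [AddCommGroup E] [Module ℝ E] {D D' : Set E}
    (h : D ⊆ D') : coneGen D ⊆ coneGen D' := by
  rintro x ⟨t, ht, d, hd, rfl⟩
  exact ⟨t, ht, d, h hd, rfl⟩

set_option maxHeartbeats 1000000 in
lemma core {m : ℕ} (C K : Set (Fin m → ℝ))
    (hC : ∀ t : ℝ, 0 ≤ t → ∀ v ∈ C, t • v ∈ C)
    (hKcone : ∀ t : ℝ, 0 ≤ t → ∀ v ∈ K, t • v ∈ K)
    (hKclosed : IsClosed K) (hKconvex : Convex ℝ K)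
    (hpointed : K ∩ (-K) = {0})
    (hmain : closure C ∩ (-K) = {0}) :
    closure (C + K) ∩ (-K) ⊆ {0} := by
  have hKadd : ∀ k1 ∈ K, ∀ k2 ∈ K, k1 + k2 ∈ K := by
    intro k1 h1 k2 h2
    have h := hKconvex h1 h2 (by norm_num : (0:ℝ) ≤ 1/2) (by norm_num : (0:ℝ) ≤ 1/2) (by norm_num)
    have h2' := hKcone 2 (by norm_num) _ h
    have : (2:ℝ) • ((1/2:ℝ) • k1 + (1/2:ℝ) • k2) = k1 + k2 := by
      rw [smul_add, smul_smul, smul_smul]; norm_num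
    rwa [this] at h2'
  rintro d ⟨hd1, hd2⟩
  obtain ⟨z, hz, hzlim⟩ := mem_closure_iff_seq_limit.mp hd1
  choose c hc q hq hzeq0 using fun n => hz n
  have hzeq : ∀ n, z n = c n + q n := fun n => (hzeq0 n).symm
  by_cases hb : Tendsto (fun n => ‖c n‖) atTop atTop
  · -- unbounded case: derive contradiction
    exfalso
    obtain ⟨N, hN⟩ := (hb.eventually_ge_atTop 1).exists_forall_of_atTop
    set c' : ℕ → (Fin m → ℝ) := fun n => c (n + N) with hc'
    have hc'norm : ∀ n, 1 ≤ ‖c' n‖ := fun n => hN (n + N) (Nat.le_add_left N n)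
    set u : ℕ → (Fin m → ℝ) := fun n => ‖c' n‖⁻¹ • c' n with hu
    have hunorm : ∀ n, ‖u n‖ = 1 := by
      intro n
      have hpos : 0 < ‖c' n‖ := lt_of_lt_of_le one_pos (hc'norm n)
      simp [hu, norm_smul, abs_of_pos (inv_pos.mpr hpos), inv_mul_cancel₀ hpos.ne']
    have husphere : ∀ n, u n ∈ Metric.sphere (0 : Fin m → ℝ) 1 := by
      intro n; simp [hunorm n]
    obtain ⟨b, hbmem, φ, hφ, hblim⟩ :=
      tendsto_subseq_of_bounded (Metric.isBounded_sphere) husphere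
    have hbnorm : ‖b‖ = 1 := by
      have := Metric.sphere_subset_closedBall
        (Metric.isClosed_sphere.closure_subset hbmem)
      simpa using Metric.isClosed_sphere.closure_subset hbmem
    have hbC : b ∈ closure C := by
      apply mem_closure_of_tendsto hblim
      filter_upwards with n
      exact hC _ (inv_nonneg.mpr (norm_nonneg _)) _ (hc _)
    -- ‖c'∘φ‖ → ∞
    have hb' : Tendsto (fun n => ‖c' (φ n)‖) atTop atTop := by
      exact (hb.comp (tendsto_add_atTop_nat N)).comp hφ.tendsto_atTop
    have hinv : Tendsto (fun n => ‖c' (φ n)‖⁻¹) atTop (𝓝 0) :=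
      tendsto_inv_atTop_zero.comp hb'
    have hz' : Tendsto (fun n => z (φ n + N)) atTop (𝓝 d) := by
      have h1 : Tendsto (fun n => φ n + N) atTop atTop :=
        (tendsto_add_atTop_nat N).comp hφ.tendsto_atTop
      exact hzlim.comp h1
    have hzsmul : Tendsto (fun n => ‖c' (φ n)‖⁻¹ • z (φ n + N)) atTop (𝓝 0) := by
      have := hinv.smul hz'
      simpa using this
    have hqlim : Tendsto (fun n => ‖c' (φ n)‖⁻¹ • q (φ n + N)) atTop (𝓝 (-b)) := by
      have heq : ∀ n, ‖c' (φ n)‖⁻¹ • q (φ n + N)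
          = ‖c' (φ n)‖⁻¹ • z (φ n + N) - u (φ n) := by
        intro n
        have : z (φ n + N) = c' (φ n) + q (φ n + N) := hzeq (φ n + N)
        simp [hu, this, smul_add]
      have := hzsmul.sub hblim
      rw [zero_sub] at this
      simpa only [heq, Function.comp_apply] using this
    have hnegb : -b ∈ K :=
      hKclosed.mem_of_tendsto hqlim
        (Eventually.of_forall fun n => hKcone _ (inv_nonneg.mpr (norm_nonneg _)) _ (hq _))
    have : b ∈ closure C ∩ (-K) := ⟨hbC, by simpa [Set.mem_neg] using hnegb⟩
    rw [hmain] at this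
    rw [this] at hbnorm
    simp at hbnorm
  · -- bounded subsequence case
    rw [tendsto_atTop] at hb
    push_neg at hb
    obtain ⟨R, hR⟩ := hb
    have hfreq : ∃ᶠ n in atTop, ‖c n‖ < R := by
      exact hR
    obtain ⟨φ, hφ, hφR⟩ := Filter.extraction_of_frequently_atTop hfreq
    have hball : ∀ n, c (φ n) ∈ Metric.closedBall (0 : Fin m → ℝ) R := by
      intro n; simpa using (hφR n).le
    obtain ⟨b, hbmem, ψ, hψ, hblim⟩ :=
      tendsto_subseq_of_bounded Metric.isBounded_closedBall hball
    have hbC : b ∈ closure C := by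
      apply mem_closure_of_tendsto hblim
      filter_upwards with n
      exact hc _
    have hzφψ : Tendsto (fun n => z (φ (ψ n))) atTop (𝓝 d) :=
      hzlim.comp ((hφ.comp hψ).tendsto_atTop)
    have hqlim : Tendsto (fun n => q (φ (ψ n))) atTop (𝓝 (d - b)) := by
      have heq : ∀ n, q (φ (ψ n)) = z (φ (ψ n)) - c (φ (ψ n)) := by
        intro n; rw [hzeq (φ (ψ n))]; abel
      simpa only [heq, Function.comp_apply] using hzφψ.sub hblim
    have hdbK : d - b ∈ K :=
      hKclosed.mem_of_tendsto hqlim (Eventually.of_forall fun n => hq _)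
    have hnegd : -d ∈ K := by rwa [Set.mem_neg] at hd2
    have hnegb : -b ∈ K := by
      have := hKadd _ hdbK _ hnegd
      have heq : d - b + -d = -b := by abel
      rwa [heq] at this
    have hb0 : b ∈ closure C ∩ (-K) := ⟨hbC, by simpa [Set.mem_neg] using hnegb⟩
    rw [hmain, Set.mem_singleton_iff] at hb0
    subst hb0
    have hdK : d ∈ K := by simpa using hdbK
    have : d ∈ K ∩ (-K) := ⟨hdK, hd2⟩
    rwa [hpointed] at this

/-- For a pointed closed convex cone `K`, `e ∈ K \ {0}` and `x̄ ∈ X`: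
`cl cone [f(X) + K - (f(x̄) - e)] ∩ (-K) = {0}` iff
`cl cone [f(X) - (f(x̄) - e)] ∩ (-K) = {0}`. -/
theorem stmt_7 {n m : ℕ} (X : Set (Fin n → ℝ)) (hX : X.Nonempty)
    (f : (Fin n → ℝ) → (Fin m → ℝ))
    (K : Set (Fin m → ℝ)) (hKne : K.Nonempty)
    (hKcone : ∀ t : ℝ, 0 ≤ t → ∀ v ∈ K, t • v ∈ K)
    (hKclosed : IsClosed K)
    (hKconvex : Convex ℝ K)
    (hKpointed : K ∩ (-K) = {0})
    (e : Fin m → ℝ) (heK : e ∈ K) (he0 : e ≠ 0)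
    (xbar : Fin n → ℝ) (hxbar : xbar ∈ X) :
    closure (coneGen (((fun x => f x - (f xbar - e)) '' X) + K)) ∩ (-K) = {0} ↔
      closure (coneGen ((fun x => f x - (f xbar - e)) '' X)) ∩ (-K) = {0} := by
  set A := (fun x => f x - (f xbar - e)) '' X with hA
  have hAne : A.Nonempty := hX.image _
  have hK0 : (0 : Fin m → ℝ) ∈ K := by
    obtain ⟨v, hv⟩ := hKne
    simpa using hKcone 0 le_rfl v hv
  have h0neg : (0 : Fin m → ℝ) ∈ -K := by simpa [Set.mem_neg] using hK0
  have hAKne : (A + K).Nonempty := hAne.add hKne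
  have hsub1 : coneGen A ⊆ coneGen (A + K) := by
    apply coneGen_mono
    intro a ha
    exact ⟨a, ha, 0, hK0, add_zero a⟩
  have hsub2 : coneGen (A + K) ⊆ coneGen A + K := by
    rintro x ⟨t, ht, d, hd, rfl⟩
    obtain ⟨a, ha, k, hk, rfl⟩ := hd
    exact ⟨t • a, ⟨t, ht, a, ha, rfl⟩, t • k, hKcone t ht k hk, (smul_add t a k).symm⟩
  constructor
  · intro h
    apply subset_antisymm
    · rintro x ⟨hx1, hx2⟩
      rw [← h]
      exact ⟨closure_mono hsub1 hx1, hx2⟩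
    · rintro x hx
      rw [Set.mem_singleton_iff] at hx
      subst hx
      exact ⟨subset_closure (zero_mem_coneGen hAne), h0neg⟩
  · intro h
    apply subset_antisymm
    · rintro x ⟨hx1, hx2⟩
      have hcore := core (coneGen A) K
        (fun t ht v hv => coneGen_smul_mem ht hv) hKcone hKclosed hKconvex hKpointed h
      exact hcore ⟨closure_mono hsub2 hx1, hx2⟩
    · rintro x hx
      rw [Set.mem_singleton_iff] at hx
      subst hx
      exact ⟨subset_closure (zero_mem_coneGen hAKne), h0neg⟩
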